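/- Define φ⁺ : G → ℂ by φ⁺(g) = ∑_{σ ∈ S_n} f_σ(g). Then φ⁺ is an eigenvector of the Iwahori Hecke operators at the simple reflections with eigenvalue p: for every 1 ≤ i < n and every g ∈ G, ∑_{t=0}^{p-1} φ⁺(g·x_i(t)·w_{s_i}) = p·φ⁺(g). -/

import Mathlib

open Matrix MeasureTheory Pointwise

variable (p n : ℕ) [Fact p.Prime]

/-- The `(i,j)` entry of an element of `GL n ℚ_[p]`. -/
def entry (g : GL (Fin n) ℚ_[p]) (i j : Fin n) : ℚ_[p] :=
  (g : Matrix (Fin n) (Fin n) ℚ_[p]) i j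

/-- The Iwahori subgroup `J`, as a subset of `GL n ℚ_[p]`: matrices of `GL_n(ℤ_p)`
(integral matrix with integral inverse) whose entries strictly below the diagonal
lie in `pℤ_p` (i.e. have norm `< 1`). -/
def Jset : Set (GL (Fin n) ℚ_[p]) :=
  {g | (∀ i j, ‖entry p n g i j‖ ≤ 1) ∧ (∀ i j, ‖entry p n g⁻¹ i j‖ ≤ 1) ∧
       ∀ i j : Fin n, j < i → ‖entry p n g i j‖ < 1}

/-- The diagonal torus `T`. -/
def Tset : Set (GL (Fin n) ℚ_[p]) :=
  {g | ∀ i j : Fin n, i ≠ j → entry p n g i j = 0}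

/-- The group `N` of upper unitriangular matrices. -/
def Nset : Set (GL (Fin n) ℚ_[p]) :=
  {g | (∀ i : Fin n, entry p n g i i = 1) ∧ ∀ i j : Fin n, j < i → entry p n g i j = 0}

/-- The upper triangular Borel subgroup `B`. -/
def Bset : Set (GL (Fin n) ℚ_[p]) :=
  {g | ∀ i j : Fin n, j < i → entry p n g i j = 0}

/-- Permutation matrix `w_σ` of `σ` as an element of `GL n ℚ_[p]`, in the convention
`w_σ · e_j = e_{σ(j)}` (entries `(w_σ)_{ij} = δ_{i, σ(j)}`). -/
noncomputable def permGL (σ : Equiv.Perm (Fin n)) : GL (Fin n) ℚ_[p] :=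
  Matrix.GeneralLinearGroup.mkOfDetNeZero ((σ.permMatrix ℚ_[p])ᵀ) (by
    rw [Matrix.det_transpose, Matrix.det_permutation]
    exact_mod_cast Int.cast_ne_zero.mpr (Equiv.Perm.sign σ).ne_zero)

/-- The elementary matrix `I + t·E_{ij}` as an element of `GL n ℚ_[p]`. -/
noncomputable def elemGL (i j : Fin n) (hij : i ≠ j) (t : ℚ_[p]) : GL (Fin n) ℚ_[p] :=
  Matrix.GeneralLinearGroup.mkOfDetNeZero (Matrix.transvection i j t) (by
    rw [Matrix.det_transvection_of_ne i j hij]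
    exact one_ne_zero)

/-- The set of inversions `Inv(σ) = {(i,j) : i < j, σ⁻¹ i > σ⁻¹ j}`. -/
def InvSet (σ : Equiv.Perm (Fin n)) : Finset (Fin n × Fin n) :=
  Finset.univ.filter fun ij => ij.1 < ij.2 ∧ σ⁻¹ ij.2 < σ⁻¹ ij.1

/-- The length `ℓ(σ)` (number of inversions) of `σ`. -/
def len (σ : Equiv.Perm (Fin n)) : ℕ := (InvSet n σ).card

/-- `i+1` as an element of `Fin n`. -/
def finSucc (i : Fin n) (h : (i : ℕ) + 1 < n) : Fin n := ⟨(i : ℕ) + 1, h⟩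

theorem finSucc_ne (i : Fin n) (h : (i : ℕ) + 1 < n) : i ≠ finSucc n i h := by
  simp [finSucc, Fin.ext_iff]

/-- The value of `χδ_B` at `b`, defined through the diagonal entries of `b`:
`(χδ_B)(b) = ∏_{i=1}^n z_i^{v(b_i)} p^{-(n+1-2i) v(b_i)}`. -/
noncomputable def chiDelta (z : Fin n → ℂˣ) (d : GL (Fin n) ℚ_[p]) : ℂ :=
  ∏ i : Fin n, ((z i : ℂ) ^ (entry p n d i i).valuation *
    (p : ℂ) ^ (-(((n : ℤ) + 1) - 2 * ((i : ℕ) + 1 : ℤ)) * (entry p n d i i).valuation))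

/-- The character `ψ(u) = ∏_{i=1}^{n-1} ψ₀(u_{i,i+1})` of `N`, built from an additive
character `ψ₀` of `ℚ_p`. -/
noncomputable def psiN (ψ₀ : ℚ_[p] → ℂ) (u : GL (Fin n) ℚ_[p]) : ℂ :=
  ∏ i : Fin n, if h : (i : ℕ) + 1 < n then ψ₀ (entry p n u i (finSucc n i h)) else 1

/-- `λ(d)` is `σ`-dominant: for all adjacent indices,
`v(d_i) - v(d_{i+1}) ≥ 0` if `σ⁻¹ i < σ⁻¹(i+1)`, and `≥ -1` if `σ⁻¹ i > σ⁻¹(i+1)`. -/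
def IsDom (σ : Equiv.Perm (Fin n)) (d : GL (Fin n) ℚ_[p]) : Prop :=
  ∀ (i : Fin n) (h : (i : ℕ) + 1 < n),
    (σ⁻¹ i < σ⁻¹ (finSucc n i h) →
      0 ≤ (entry p n d i i).valuation
            - (entry p n d (finSucc n i h) (finSucc n i h)).valuation) ∧
    (σ⁻¹ (finSucc n i h) < σ⁻¹ i →
      -1 ≤ (entry p n d i i).valuation
            - (entry p n d (finSucc n i h) (finSucc n i h)).valuation)

/-- The dominant part `T⁺` of the diagonal torus: `v(d_1) ≥ … ≥ v(d_n)`. -/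
def Tplus : Set (GL (Fin n) ℚ_[p]) :=
  {d | d ∈ Tset p n ∧ Antitone fun i : Fin n => (entry p n d i i).valuation}

/-- The double coset `J g J`. -/
def dcos (g : GL (Fin n) ℚ_[p]) : Set (GL (Fin n) ℚ_[p]) :=
  {x | ∃ a ∈ Jset p n, ∃ b ∈ Jset p n, x = a * g * b}


/-! ## Auxiliary development -/

section AuxDev

open Equiv

variable {p n}

/-! ### Permutation combinatorics -/

lemma perm_eq_one_of_le (σ : Equiv.Perm (Fin n)) (h : ∀ i, σ i ≤ i) : σ = 1 := by
  have hsum : ∑ i : Fin n, ((σ i : ℕ)) = ∑ i : Fin n, (i : ℕ) :=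
    Equiv.sum_comp σ (fun i => (i : ℕ))
  have hpt : ∀ i ∈ Finset.univ, ((σ i : ℕ)) = (i : ℕ) :=
    (Finset.sum_eq_sum_iff_of_le (fun i _ => Fin.le_iff_val_le_val.mp (h i))).mp hsum
  ext i
  exact hpt i (Finset.mem_univ i)

lemma perm_eq_of_le (σ τ : Equiv.Perm (Fin n)) (h : ∀ i, τ i ≤ σ i) : τ = σ := by
  have h1 : τ * σ⁻¹ = 1 := by
    apply perm_eq_one_of_le
    intro j
    simpa using h (σ⁻¹ j)
  have h2 := congrArg (· * σ) h1
  simpa [mul_assoc] using h2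

lemma perm_exists_gt {σ : Equiv.Perm (Fin n)} (hσ : σ ≠ 1) : ∃ i, i < σ i := by
  by_contra hc
  push_neg at hc
  exact hσ (perm_eq_one_of_le σ hc)

lemma perm_exists_gt' {σ : Equiv.Perm (Fin n)} {a b : Fin n} (hba : b < a) (hσ : σ a = b) :
    ∃ i, σ i ≠ b ∧ i < σ i := by
  by_contra hc
  push_neg at hc
  have hle : ∀ i, σ i ≤ i := by
    intro i
    by_cases hib : σ i = b
    · have hia : i = a := σ.injective (by rw [hib, hσ])
      subst hia
      exact le_of_lt (hσ ▸ hba)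
    · exact hc i hib
  have h1 : σ = 1 := perm_eq_one_of_le σ hle
  rw [h1] at hσ
  simp only [Equiv.Perm.one_apply] at hσ
  exact absurd hσ (Fin.ne_of_gt hba)

/-! ### Ultrametric estimates -/

lemma norm_sum_le_of {α : Type*} (s : Finset α) (f : α → ℚ_[p]) (C : ℝ) (hC : 0 ≤ C)
    (h : ∀ a ∈ s, ‖f a‖ ≤ C) : ‖∑ a ∈ s, f a‖ ≤ C := by
  classical
  induction s using Finset.induction_on with
  | empty => simpa using hC
  | insert _ _ ha ih =>
      rw [Finset.sum_insert ha]
      exact le_trans (Padic.nonarchimedean _ _)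
        (max_le (h _ (Finset.mem_insert_self _ _))
          (ih (fun b hb => h b (Finset.mem_insert_of_mem hb))))

lemma norm_sum_lt_one {α : Type*} (s : Finset α) (f : α → ℚ_[p])
    (h : ∀ a ∈ s, ‖f a‖ < 1) : ‖∑ a ∈ s, f a‖ < 1 := by
  classical
  induction s using Finset.induction_on with
  | empty => simpa using one_pos
  | insert _ _ ha ih =>
      rw [Finset.sum_insert ha]
      exact lt_of_le_of_lt (Padic.nonarchimedean _ _)
        (max_lt (h _ (Finset.mem_insert_self _ _))
          (ih (fun b hb => h b (Finset.mem_insert_of_mem hb))))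

lemma real_eq_one_of_mul {x y : ℝ} (h : x * y = 1) (hx : x ≤ 1) (hy : y ≤ 1) (hx0 : 0 ≤ x) :
    x = 1 := by nlinarith

lemma mul_le_one_of {x y : ℝ} (hx : x ≤ 1) (hy : y ≤ 1) (hx0 : 0 ≤ x) (hy0 : 0 ≤ y) :
    x * y ≤ 1 := by nlinarith

lemma norm_prod_le_one {f : Fin n → ℚ_[p]} (h : ∀ i, ‖f i‖ ≤ 1) :
    ‖∏ i, f i‖ ≤ 1 := by
  rw [norm_prod]
  exact Finset.prod_le_one (fun i _ => norm_nonneg _) (fun i _ => h i)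

lemma norm_prod_lt_one {f : Fin n → ℚ_[p]} (h : ∀ i, ‖f i‖ ≤ 1) {i₀ : Fin n}
    (h0 : ‖f i₀‖ < 1) : ‖∏ i, f i‖ < 1 := by
  rw [norm_prod, ← Finset.mul_prod_erase Finset.univ _ (Finset.mem_univ i₀)]
  calc ‖f i₀‖ * ∏ i ∈ Finset.univ.erase i₀, ‖f i‖
      ≤ ‖f i₀‖ * 1 := mul_le_mul_of_nonneg_left
        (Finset.prod_le_one (fun i _ => norm_nonneg _) (fun i _ => h i)) (norm_nonneg _)
    _ = ‖f i₀‖ := mul_one _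
    _ < 1 := h0

/-! ### Determinant and adjugate estimates -/

lemma det_norm_le_one (A : Matrix (Fin n) (Fin n) ℚ_[p]) (h : ∀ k l, ‖A k l‖ ≤ 1) :
    ‖A.det‖ ≤ 1 := by
  rw [Matrix.det_apply']
  refine norm_sum_le_of _ _ _ zero_le_one (fun σ _ => ?_)
  rw [norm_mul]
  calc ‖((Equiv.Perm.sign σ : ℤ) : ℚ_[p])‖ * ‖∏ i, A (σ i) i‖
      ≤ 1 * 1 := mul_le_mul (Padic.norm_int_le_one _)
        (norm_prod_le_one (fun i => h _ _)) (norm_nonneg _) zero_le_one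
    _ = 1 := mul_one 1

lemma adjugate_below_norm_lt (A : Matrix (Fin n) (Fin n) ℚ_[p])
    (hA1 : ∀ k l, ‖A k l‖ ≤ 1) (hA : ∀ k l, l < k → ‖A k l‖ < 1)
    {a b : Fin n} (hba : b < a) : ‖A.adjugate a b‖ < 1 := by
  rw [Matrix.adjugate_apply, Matrix.det_apply']
  refine norm_sum_lt_one _ _ (fun σ _ => ?_)
  set B := A.updateRow b (Pi.single a (1:ℚ_[p])) with hB
  have hBle : ∀ k l, ‖B k l‖ ≤ 1 := by
    intro k l
    by_cases hk : k = b
    · subst hk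
      rw [hB, Matrix.updateRow_self]
      by_cases hla : l = a <;> simp [Pi.single_apply, hla]
    · rw [hB, Matrix.updateRow_ne hk]
      exact hA1 k l
  rw [norm_mul]
  by_cases hσ : σ a = b
  · obtain ⟨i, hib, hlt⟩ := perm_exists_gt' hba hσ
    have hfac : ‖B (σ i) i‖ < 1 := by
      rw [hB, Matrix.updateRow_ne hib]
      exact hA _ _ hlt
    calc ‖((Equiv.Perm.sign σ : ℤ) : ℚ_[p])‖ * ‖∏ i, B (σ i) i‖
        ≤ 1 * ‖∏ i, B (σ i) i‖ :=
          mul_le_mul_of_nonneg_right (Padic.norm_int_le_one _) (norm_nonneg _)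
      _ = ‖∏ i, B (σ i) i‖ := one_mul _
      _ < 1 := norm_prod_lt_one (fun i => hBle _ _) hfac
  · have hzero : ∏ i, B (σ i) i = 0 := by
      refine Finset.prod_eq_zero (Finset.mem_univ (σ⁻¹ b)) ?_
      have h1 : σ (σ⁻¹ b) = b := σ.apply_symm_apply b
      rw [h1]
      have h2 : σ⁻¹ b ≠ a := fun hcon => hσ (by rw [← hcon, h1])
      simp [hB, Pi.single_eq_of_ne (show σ.symm b ≠ a from h2)]
    rw [hzero]
    simpa using one_pos

lemma adjugate_below_eq_zero (A : Matrix (Fin n) (Fin n) ℚ_[p])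
    (hA : ∀ k l, l < k → A k l = 0) {a b : Fin n} (hba : b < a) : A.adjugate a b = 0 := by
  rw [Matrix.adjugate_apply, Matrix.det_apply']
  refine Finset.sum_eq_zero (fun σ _ => ?_)
  set B := A.updateRow b (Pi.single a (1:ℚ_[p])) with hB
  by_cases hσ : σ a = b
  · obtain ⟨i, hib, hlt⟩ := perm_exists_gt' hba hσ
    have hfac : B (σ i) i = 0 := by
      rw [hB, Matrix.updateRow_ne hib]
      exact hA _ _ hlt
    have hprod : ∏ m, B (σ m) m = 0 := Finset.prod_eq_zero (Finset.mem_univ i) hfac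
    rw [hprod, mul_zero]
  · have hzero : B (σ (σ⁻¹ b)) (σ⁻¹ b) = 0 := by
      have h1 : σ (σ⁻¹ b) = b := σ.apply_symm_apply b
      rw [h1]
      have h2 : σ⁻¹ b ≠ a := fun hcon => hσ (by rw [← hcon, h1])
      simp [hB, Pi.single_eq_of_ne (show σ.symm b ≠ a from h2)]
    have hprod : ∏ m, B (σ m) m = 0 := Finset.prod_eq_zero (Finset.mem_univ (σ⁻¹ b)) hzero
    rw [hprod, mul_zero]

lemma det_diag_norm_eq_one (A : Matrix (Fin n) (Fin n) ℚ_[p])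
    (hA1 : ∀ k l, ‖A k l‖ ≤ 1) (hA : ∀ k l, l < k → ‖A k l‖ < 1)
    (hdet : ‖A.det‖ = 1) : ∀ a, ‖A a a‖ = 1 := by
  have hsplit : A.det = (∏ i, A i i) +
      ∑ σ ∈ Finset.univ.erase (1 : Equiv.Perm (Fin n)),
        ((Equiv.Perm.sign σ : ℤ) : ℚ_[p]) * ∏ i, A (σ i) i := by
    rw [Matrix.det_apply', ← Finset.add_sum_erase _ _ (Finset.mem_univ 1)]
    simp
  have hS : ‖∑ σ ∈ Finset.univ.erase (1 : Equiv.Perm (Fin n)),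
      ((Equiv.Perm.sign σ : ℤ) : ℚ_[p]) * ∏ i, A (σ i) i‖ < 1 := by
    refine norm_sum_lt_one _ _ (fun σ hσ => ?_)
    obtain ⟨i, hlt⟩ := perm_exists_gt (Finset.ne_of_mem_erase hσ)
    rw [norm_mul]
    calc ‖((Equiv.Perm.sign σ : ℤ) : ℚ_[p])‖ * ‖∏ i, A (σ i) i‖
        ≤ 1 * ‖∏ i, A (σ i) i‖ :=
          mul_le_mul_of_nonneg_right (Padic.norm_int_le_one _) (norm_nonneg _)
      _ = ‖∏ i, A (σ i) i‖ := one_mul _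
      _ < 1 := norm_prod_lt_one (fun i => hA1 _ _) (hA _ _ hlt)
  have hprod : ‖∏ i, A i i‖ = 1 := by
    have hle : ‖∏ i, A i i‖ ≤ 1 := norm_prod_le_one (fun i => hA1 _ _)
    rcases lt_or_eq_of_le hle with hlt | heq
    · exfalso
      have h2 : ‖A.det‖ < 1 := by
        rw [hsplit]
        exact lt_of_le_of_lt (Padic.nonarchimedean _ _) (max_lt hlt hS)
      rw [hdet] at h2
      exact lt_irrefl _ h2
    · exact heq
  intro a
  rw [norm_prod] at hprod
  rw [← Finset.mul_prod_erase Finset.univ _ (Finset.mem_univ a)] at hprod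
  exact real_eq_one_of_mul hprod (hA1 a a)
    (Finset.prod_le_one (fun i _ => norm_nonneg _) (fun i _ => hA1 i i)) (norm_nonneg _)

end AuxDev

section GLDev

open Equiv

variable {p n}

lemma entry_apply (g : GL (Fin n) ℚ_[p]) (k l : Fin n) :
    entry p n g k l = (g : Matrix (Fin n) (Fin n) ℚ_[p]) k l := rfl

lemma entry_mul (g h : GL (Fin n) ℚ_[p]) (a b : Fin n) :
    entry p n (g * h) a b = ∑ k, entry p n g a k * entry p n h k b := by
  simp [entry_apply, Matrix.mul_apply]

lemma gl_coe_inv (g : GL (Fin n) ℚ_[p]) :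
    ((g⁻¹ : GL (Fin n) ℚ_[p]) : Matrix (Fin n) (Fin n) ℚ_[p])
      = ((g : Matrix (Fin n) (Fin n) ℚ_[p]))⁻¹ :=
  Matrix.coe_units_inv g

lemma det_mul_det_inv (g : GL (Fin n) ℚ_[p]) :
    ((g : Matrix (Fin n) (Fin n) ℚ_[p]).det) *
      (((g⁻¹ : GL (Fin n) ℚ_[p]) : Matrix (Fin n) (Fin n) ℚ_[p]).det) = 1 := by
  rw [← Matrix.det_mul, ← Units.val_mul, mul_inv_cancel, Units.val_one, Matrix.det_one]

lemma J_det_norm_one {g : GL (Fin n) ℚ_[p]} (hg : g ∈ Jset p n) :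
    ‖(g : Matrix (Fin n) (Fin n) ℚ_[p]).det‖ = 1 := by
  have h1 : ‖(g : Matrix (Fin n) (Fin n) ℚ_[p]).det‖ ≤ 1 :=
    det_norm_le_one (g : Matrix (Fin n) (Fin n) ℚ_[p]) (fun k l => hg.1 k l)
  have h2 : ‖((g⁻¹ : GL (Fin n) ℚ_[p]) : Matrix (Fin n) (Fin n) ℚ_[p]).det‖ ≤ 1 :=
    det_norm_le_one ((g⁻¹ : GL (Fin n) ℚ_[p]) : Matrix (Fin n) (Fin n) ℚ_[p])
      (fun k l => hg.2.1 k l)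
  have h3 := det_mul_det_inv g
  refine real_eq_one_of_mul ?_ h1 h2 (norm_nonneg _)
  rw [← norm_mul, h3, norm_one]

lemma J_diag_unit {g : GL (Fin n) ℚ_[p]} (hg : g ∈ Jset p n) (a : Fin n) :
    ‖entry p n g a a‖ = 1 :=
  det_diag_norm_eq_one (g : Matrix (Fin n) (Fin n) ℚ_[p]) (fun k l => hg.1 k l)
    (fun k l h => hg.2.2 k l h) (J_det_norm_one hg) a

lemma J_one : (1 : GL (Fin n) ℚ_[p]) ∈ Jset p n := by
  refine ⟨?_, ?_, ?_⟩
  · intro k l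
    rw [entry_apply, Units.val_one, Matrix.one_apply]
    split_ifs <;> simp
  · intro k l
    rw [inv_one, entry_apply, Units.val_one, Matrix.one_apply]
    split_ifs <;> simp
  · intro k l hlk
    rw [entry_apply, Units.val_one, Matrix.one_apply, if_neg (Fin.ne_of_gt hlk)]
    simpa using one_pos

lemma J_mul {g h : GL (Fin n) ℚ_[p]} (hg : g ∈ Jset p n) (hh : h ∈ Jset p n) :
    g * h ∈ Jset p n := by
  refine ⟨?_, ?_, ?_⟩
  · intro k l
    rw [entry_mul]
    refine norm_sum_le_of _ _ _ zero_le_one (fun m _ => ?_)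
    rw [norm_mul]
    exact mul_le_one_of (hg.1 k m) (hh.1 m l) (norm_nonneg _) (norm_nonneg _)
  · intro k l
    rw [_root_.mul_inv_rev, entry_mul]
    refine norm_sum_le_of _ _ _ zero_le_one (fun m _ => ?_)
    rw [norm_mul]
    exact mul_le_one_of (hh.2.1 k m) (hg.2.1 m l) (norm_nonneg _) (norm_nonneg _)
  · intro k l hlk
    rw [entry_mul]
    refine norm_sum_lt_one _ _ (fun m _ => ?_)
    rw [norm_mul]
    rcases lt_or_ge m k with hmk | hkm
    · calc ‖entry p n g k m‖ * ‖entry p n h m l‖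
          ≤ ‖entry p n g k m‖ * 1 :=
            mul_le_mul_of_nonneg_left (hh.1 m l) (norm_nonneg _)
        _ = ‖entry p n g k m‖ := mul_one _
        _ < 1 := hg.2.2 k m hmk
    · have hlm : l < m := lt_of_lt_of_le hlk hkm
      calc ‖entry p n g k m‖ * ‖entry p n h m l‖
          ≤ 1 * ‖entry p n h m l‖ :=
            mul_le_mul_of_nonneg_right (hg.1 k m) (norm_nonneg _)
        _ = ‖entry p n h m l‖ := one_mul _
        _ < 1 := hh.2.2 m l hlm

lemma J_inv {g : GL (Fin n) ℚ_[p]} (hg : g ∈ Jset p n) : g⁻¹ ∈ Jset p n := by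
  refine ⟨hg.2.1, ?_, ?_⟩
  · intro k l
    rw [inv_inv]
    exact hg.1 k l
  · intro k l hlk
    rw [entry_apply, gl_coe_inv, Matrix.inv_def, Matrix.smul_apply, smul_eq_mul, norm_mul]
    have hdet : ‖Ring.inverse (g : Matrix (Fin n) (Fin n) ℚ_[p]).det‖ = 1 := by
      rw [Ring.inverse_eq_inv', norm_inv, J_det_norm_one hg]
      norm_num
    rw [hdet, one_mul]
    exact adjugate_below_norm_lt (g : Matrix (Fin n) (Fin n) ℚ_[p]) (fun a b => hg.1 a b)
      (fun a b hab => hg.2.2 a b hab) hlk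

lemma B_one : (1 : GL (Fin n) ℚ_[p]) ∈ Bset p n := by
  intro k l hlk
  rw [entry_apply, Units.val_one, Matrix.one_apply, if_neg (Fin.ne_of_gt hlk)]

lemma B_mul {g h : GL (Fin n) ℚ_[p]} (hg : g ∈ Bset p n) (hh : h ∈ Bset p n) :
    g * h ∈ Bset p n := by
  intro k l hlk
  rw [entry_mul]
  refine Finset.sum_eq_zero (fun m _ => ?_)
  rcases lt_or_ge m k with hmk | hkm
  · rw [hg k m hmk, zero_mul]
  · rw [hh m l (lt_of_lt_of_le hlk hkm), mul_zero]

lemma B_inv {g : GL (Fin n) ℚ_[p]} (hg : g ∈ Bset p n) : g⁻¹ ∈ Bset p n := by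
  intro k l hlk
  rw [entry_apply, gl_coe_inv, Matrix.inv_def, Matrix.smul_apply, smul_eq_mul]
  rw [adjugate_below_eq_zero (g : Matrix (Fin n) (Fin n) ℚ_[p]) (fun a b hab => hg a b hab) hlk,
    mul_zero]

lemma B_diag_mul {g h : GL (Fin n) ℚ_[p]} (hg : g ∈ Bset p n) (hh : h ∈ Bset p n) (a : Fin n) :
    entry p n (g * h) a a = entry p n g a a * entry p n h a a := by
  rw [entry_mul]
  refine Finset.sum_eq_single a (fun m _ hm => ?_) (fun hmem => absurd (Finset.mem_univ a) hmem)
  rcases lt_or_ge m a with hma | ham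
  · rw [hg a m hma, zero_mul]
  · rw [hh m a (lt_of_le_of_ne ham (Ne.symm hm)), mul_zero]

lemma B_diag_ne_zero {g : GL (Fin n) ℚ_[p]} (hg : g ∈ Bset p n) (a : Fin n) :
    entry p n g a a ≠ 0 := by
  have hdet : (g : Matrix (Fin n) (Fin n) ℚ_[p]).det ≠ 0 :=
    left_ne_zero_of_mul_eq_one (det_mul_det_inv g)
  have htri : (g : Matrix (Fin n) (Fin n) ℚ_[p]).BlockTriangular id :=
    fun i j hij => hg i j hij
  rw [Matrix.det_of_upperTriangular htri] at hdet
  exact Finset.prod_ne_zero_iff.mp hdet a (Finset.mem_univ a)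

/-! ### chiDelta -/

lemma padic_val_zero_of_norm_one {x : ℚ_[p]} (hx : ‖x‖ = 1) : x.valuation = 0 := by
  have hx0 : x ≠ 0 := by
    intro h0
    rw [h0, norm_zero] at hx
    exact zero_ne_one hx
  have hval := Padic.norm_eq_zpow_neg_valuation hx0
  rw [hx] at hval
  have hp1 : (1:ℝ) < (p:ℝ) := by exact_mod_cast (Fact.out : p.Prime).one_lt
  have hinj := zpow_right_injective₀ (lt_trans zero_lt_one hp1) (ne_of_gt hp1)
  have h0 : ((p:ℝ)) ^ (-x.valuation) = ((p:ℝ)) ^ (0:ℤ) := by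
    rw [zpow_zero, ← hval]
  have := hinj h0
  omega

lemma chiDelta_one (z : Fin n → ℂˣ) : chiDelta p n z 1 = 1 := by
  unfold chiDelta
  refine Finset.prod_eq_one (fun a _ => ?_)
  have h1 : entry p n (1 : GL (Fin n) ℚ_[p]) a a = 1 := by
    rw [entry_apply, Units.val_one, Matrix.one_apply_eq]
  rw [h1, Padic.valuation_one]
  simp

lemma chiDelta_eq_one (z : Fin n → ℂˣ) {b : GL (Fin n) ℚ_[p]}
    (hdiag : ∀ a, ‖entry p n b a a‖ = 1) : chiDelta p n z b = 1 := by
  unfold chiDelta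
  refine Finset.prod_eq_one (fun a _ => ?_)
  rw [padic_val_zero_of_norm_one (hdiag a)]
  simp

lemma chiDelta_mul (z : Fin n → ℂˣ) {b b' : GL (Fin n) ℚ_[p]}
    (hb : b ∈ Bset p n) (hb' : b' ∈ Bset p n) :
    chiDelta p n z (b * b') = chiDelta p n z b * chiDelta p n z b' := by
  unfold chiDelta
  rw [← Finset.prod_mul_distrib]
  refine Finset.prod_congr rfl (fun a _ => ?_)
  rw [B_diag_mul hb hb' a,
    Padic.valuation_mul (B_diag_ne_zero hb a) (B_diag_ne_zero hb' a)]
  have hz : ((z a : ℂ)) ≠ 0 := Units.ne_zero (z a)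
  have hp0 : ((p : ℂ)) ≠ 0 := by
    exact_mod_cast (Fact.out : p.Prime).pos.ne'
  rw [zpow_add₀ hz, mul_add, zpow_add₀ hp0]
  ring

end GLDev

section UnitsDev

open Equiv

variable {p n}

/-! ### permGL basics -/

lemma permGL_coe (π : Equiv.Perm (Fin n)) (k l : Fin n) :
    entry p n (permGL p n π) k l = if k = π l then 1 else 0 := by
  show ((π.permMatrix ℚ_[p])ᵀ) k l = _
  rw [Matrix.transpose_apply]
  simp only [Equiv.Perm.permMatrix, PEquiv.toMatrix_apply, Equiv.toPEquiv_apply]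
  by_cases hkl : k = π l
  · simp [hkl]
  · simp [hkl, Ne.symm hkl]

lemma permM_mul_apply (π : Equiv.Perm (Fin n)) (X : Matrix (Fin n) (Fin n) ℚ_[p]) (a b : Fin n) :
    (((permGL p n π : GL (Fin n) ℚ_[p]) : Matrix (Fin n) (Fin n) ℚ_[p]) * X) a b
      = X (π⁻¹ a) b := by
  rw [Matrix.mul_apply]
  rw [Finset.sum_eq_single (π⁻¹ a)]
  · rw [← entry_apply, permGL_coe, if_pos (by simp), one_mul]
  · intro m _ hm
    rw [← entry_apply, permGL_coe, if_neg, zero_mul]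
    intro hcon
    exact hm (by rw [hcon]; simp)
  · intro hmem
    exact absurd (Finset.mem_univ _) hmem

lemma mul_permM_apply (X : Matrix (Fin n) (Fin n) ℚ_[p]) (π : Equiv.Perm (Fin n)) (a b : Fin n) :
    (X * ((permGL p n π : GL (Fin n) ℚ_[p]) : Matrix (Fin n) (Fin n) ℚ_[p])) a b
      = X a (π b) := by
  rw [Matrix.mul_apply]
  rw [Finset.sum_eq_single (π b)]
  · rw [← entry_apply, permGL_coe, if_pos rfl, mul_one]
  · intro m _ hm
    rw [← entry_apply, permGL_coe, if_neg (fun hcon => hm hcon), mul_zero]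
  · intro hmem
    exact absurd (Finset.mem_univ _) hmem

lemma permGL_mul (σ τ : Equiv.Perm (Fin n)) :
    permGL p n σ * permGL p n τ = permGL p n (σ * τ) := by
  apply Units.ext
  apply Matrix.ext
  intro k l
  rw [Units.val_mul, permM_mul_apply, ← entry_apply, ← entry_apply, permGL_coe, permGL_coe]
  have : σ⁻¹ k = τ l ↔ k = (σ * τ) l := by
    rw [Equiv.Perm.mul_apply]
    constructor
    · intro h1; rw [← h1]; simp
    · intro h1; rw [h1]; simp
  simp only [this]

lemma permGL_one : permGL p n 1 = 1 := by
  apply Units.ext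
  apply Matrix.ext
  intro k l
  rw [← entry_apply, permGL_coe, Units.val_one, Matrix.one_apply]
  simp
  split_ifs <;> simp_all

lemma permGL_inv (σ : Equiv.Perm (Fin n)) : (permGL p n σ)⁻¹ = permGL p n σ⁻¹ := by
  apply inv_eq_of_mul_eq_one_right
  rw [permGL_mul, mul_inv_cancel, permGL_one]


lemma std_apply (a b : Fin n) (c : ℚ_[p]) (k l : Fin n) :
    Matrix.single a b c k l = if a = k ∧ b = l then c else 0 := by
  by_cases h : a = k ∧ b = l
  · obtain ⟨rfl, rfl⟩ := h
    simp
  · simp [h]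

/-! ### stdU -/

lemma std_add_mul_std {a b : Fin n} (hab : a ≠ b) (c d : ℚ_[p]) :
    ((1 + Matrix.single a b c) * (1 + Matrix.single a b d)
      : Matrix (Fin n) (Fin n) ℚ_[p]) = 1 + Matrix.single a b (c + d) := by
  have h0 : (Matrix.single a b c * Matrix.single a b d
      : Matrix (Fin n) (Fin n) ℚ_[p]) = 0 :=
    Matrix.single_mul_single_of_ne c a b a (Ne.symm hab) d
  have hexp : ((1 + Matrix.single a b c) * (1 + Matrix.single a b d)
      : Matrix (Fin n) (Fin n) ℚ_[p])
      = 1 + (Matrix.single a b c + Matrix.single a b d)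
        + Matrix.single a b c * Matrix.single a b d := by
    noncomm_ring
  rw [hexp, h0, add_zero, Matrix.single_add]

noncomputable def stdU (a b : Fin n) (hab : a ≠ b) (c : ℚ_[p]) : GL (Fin n) ℚ_[p] :=
  ⟨1 + Matrix.single a b c, 1 + Matrix.single a b (-c),
   by rw [std_add_mul_std (p := p) hab c (-c), add_neg_cancel, Matrix.single_zero,
        add_zero],
   by rw [std_add_mul_std (p := p) hab (-c) c, neg_add_cancel, Matrix.single_zero,
        add_zero]⟩

lemma stdU_val (a b : Fin n) (hab : a ≠ b) (c : ℚ_[p]) :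
    ((stdU a b hab c : GL (Fin n) ℚ_[p]) : Matrix (Fin n) (Fin n) ℚ_[p])
      = 1 + Matrix.single a b c := rfl

lemma stdU_mul (a b : Fin n) (hab : a ≠ b) (c d : ℚ_[p]) :
    stdU a b hab c * stdU a b hab d = stdU a b hab (c + d) :=
  Units.ext (std_add_mul_std hab c d)

lemma stdU_zero (a b : Fin n) (hab : a ≠ b) : stdU a b hab (0:ℚ_[p]) = 1 := by
  apply Units.ext
  rw [stdU_val, Matrix.single_zero, add_zero, Units.val_one]

lemma stdU_inv (a b : Fin n) (hab : a ≠ b) (c : ℚ_[p]) :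
    (stdU a b hab c)⁻¹ = stdU a b hab (-c) := by
  apply inv_eq_of_mul_eq_one_right
  rw [stdU_mul, add_neg_cancel, stdU_zero]

lemma stdU_congr {a b a' b' : Fin n} (ha : a = a') (hb : b = b') (hab : a ≠ b)
    (hab' : a' ≠ b') (c : ℚ_[p]) : stdU a b hab c = stdU a' b' hab' c := by
  subst ha; subst hb; rfl

lemma stdU_entry (a b : Fin n) (hab : a ≠ b) (c : ℚ_[p]) (k l : Fin n) :
    entry p n (stdU a b hab c) k l
      = (if k = l then (1:ℚ_[p]) else 0) + (if a = k ∧ b = l then c else 0) := by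
  rw [entry_apply, stdU_val, Matrix.add_apply, Matrix.one_apply, std_apply]

lemma stdU_mem_J_upper {a b : Fin n} (hne : a ≠ b) (hab : a < b) {c : ℚ_[p]} (hc : ‖c‖ ≤ 1) :
    stdU a b hne c ∈ Jset p n := by
  have hentry : ∀ (d : ℚ_[p]), ‖d‖ ≤ 1 → ∀ k l, ‖entry p n (stdU a b hne d) k l‖ ≤ 1 := by
    intro d hd k l
    rw [stdU_entry]
    by_cases h1 : k = l
    · rw [if_pos h1, if_neg (by rintro ⟨rfl, rfl⟩; exact hne h1), add_zero, norm_one]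
    · rw [if_neg h1, zero_add]
      by_cases h2 : a = k ∧ b = l
      · rw [if_pos h2]; exact hd
      · rw [if_neg h2]; simp
  refine ⟨hentry c hc, ?_, ?_⟩
  · rw [stdU_inv]
    exact hentry (-c) (by rwa [norm_neg]) 
  · intro k l hlk
    rw [stdU_entry, if_neg (Fin.ne_of_gt hlk), zero_add, if_neg, norm_zero]
    · exact one_pos
    · rintro ⟨rfl, rfl⟩
      exact absurd hab (not_lt_of_gt hlk)

lemma stdU_mem_J_lower {a b : Fin n} (hne : a ≠ b) (hba : b < a) {c : ℚ_[p]} (hc : ‖c‖ < 1) :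
    stdU a b hne c ∈ Jset p n := by
  have hentry : ∀ (d : ℚ_[p]), ‖d‖ < 1 → ∀ k l, ‖entry p n (stdU a b hne d) k l‖ ≤ 1 := by
    intro d hd k l
    rw [stdU_entry]
    by_cases h1 : k = l
    · rw [if_pos h1, if_neg (by rintro ⟨rfl, rfl⟩; exact hne h1), add_zero, norm_one]
    · rw [if_neg h1, zero_add]
      by_cases h2 : a = k ∧ b = l
      · rw [if_pos h2]; exact le_of_lt hd
      · rw [if_neg h2]; simp
  refine ⟨hentry c hc, ?_, ?_⟩
  · rw [stdU_inv]
    exact hentry (-c) (by rwa [norm_neg])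
  · intro k l hlk
    rw [stdU_entry, if_neg (Fin.ne_of_gt hlk), zero_add]
    by_cases h2 : a = k ∧ b = l
    · rw [if_pos h2]; exact hc
    · rw [if_neg h2, norm_zero]; exact one_pos

lemma stdU_mem_B {a b : Fin n} (hne : a ≠ b) (hab : a < b) (c : ℚ_[p]) :
    stdU a b hne c ∈ Bset p n := by
  intro k l hlk
  rw [stdU_entry, if_neg (Fin.ne_of_gt hlk), zero_add, if_neg]
  rintro ⟨rfl, rfl⟩
  exact absurd hab (not_lt_of_gt hlk)

lemma stdU_diag (a b : Fin n) (hne : a ≠ b) (c : ℚ_[p]) (k : Fin n) :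
    entry p n (stdU a b hne c) k k = 1 := by
  rw [stdU_entry, if_pos rfl, if_neg (by rintro ⟨rfl, rfl⟩; exact hne rfl), add_zero]

/-! ### diagU -/

noncomputable def diagU (d : Fin n → ℚ_[p]) (hd : ∀ a, d a ≠ 0) : GL (Fin n) ℚ_[p] :=
  ⟨Matrix.diagonal d, Matrix.diagonal (fun a => (d a)⁻¹),
   by rw [Matrix.diagonal_mul_diagonal]
      have h1 : (fun i => d i * (d i)⁻¹) = fun _ => (1:ℚ_[p]) :=
        funext (fun a => mul_inv_cancel₀ (hd a))
      rw [h1, Matrix.diagonal_one],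
   by rw [Matrix.diagonal_mul_diagonal]
      have h1 : (fun i => (d i)⁻¹ * d i) = fun _ => (1:ℚ_[p]) :=
        funext (fun a => inv_mul_cancel₀ (hd a))
      rw [h1, Matrix.diagonal_one]⟩

lemma diagU_val (d : Fin n → ℚ_[p]) (hd : ∀ a, d a ≠ 0) :
    ((diagU d hd : GL (Fin n) ℚ_[p]) : Matrix (Fin n) (Fin n) ℚ_[p]) = Matrix.diagonal d := rfl

lemma diagU_inv (d : Fin n → ℚ_[p]) (hd : ∀ a, d a ≠ 0) :
    (diagU d hd)⁻¹ = diagU (fun a => (d a)⁻¹) (fun a => inv_ne_zero (hd a)) := by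
  apply inv_eq_of_mul_eq_one_right
  apply Units.ext
  rw [Units.val_mul, diagU_val, diagU_val, Matrix.diagonal_mul_diagonal]
  have h1 : (fun i => d i * (d i)⁻¹) = fun _ => (1:ℚ_[p]) :=
    funext (fun a => mul_inv_cancel₀ (hd a))
  rw [h1, Matrix.diagonal_one, Units.val_one]

lemma diagU_mem_J {d : Fin n → ℚ_[p]} (hd : ∀ a, d a ≠ 0) (hd1 : ∀ a, ‖d a‖ = 1) :
    diagU d hd ∈ Jset p n := by
  have hentry : ∀ (e : Fin n → ℚ_[p]) (he : ∀ a, e a ≠ 0), (∀ a, ‖e a‖ = 1) →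
      ∀ k l, ‖entry p n (diagU e he) k l‖ ≤ 1 := by
    intro e he he1 k l
    rw [entry_apply, diagU_val, Matrix.diagonal_apply]
    by_cases h1 : k = l
    · rw [if_pos h1, he1 k]
    · rw [if_neg h1, norm_zero]; exact zero_le_one
  refine ⟨hentry d hd hd1, ?_, ?_⟩
  · rw [diagU_inv]
    exact hentry (fun a => (d a)⁻¹) (fun a => inv_ne_zero (hd a))
      (fun a => by rw [norm_inv, hd1 a]; norm_num)
  · intro k l hlk
    rw [entry_apply, diagU_val, Matrix.diagonal_apply, if_neg (Fin.ne_of_gt hlk), norm_zero]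
    exact one_pos

/-! ### Commutation relations -/

lemma permM_mul_std (π : Equiv.Perm (Fin n)) (a b : Fin n) (c : ℚ_[p]) :
    ((permGL p n π : GL (Fin n) ℚ_[p]) : Matrix (Fin n) (Fin n) ℚ_[p])
        * Matrix.single a b c = Matrix.single (π a) b c := by
  apply Matrix.ext
  intro k l
  rw [permM_mul_apply, std_apply, std_apply]
  have hiff : (a = π⁻¹ k ∧ b = l) ↔ (π a = k ∧ b = l) := by
    constructor
    · rintro ⟨h1, h2⟩; exact ⟨by rw [h1]; simp, h2⟩
    · rintro ⟨h1, h2⟩; exact ⟨by rw [← h1]; simp, h2⟩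
  exact if_congr hiff rfl rfl

lemma std_mul_permM (a b : Fin n) (c : ℚ_[p]) (π : Equiv.Perm (Fin n)) :
    (Matrix.single a b c : Matrix (Fin n) (Fin n) ℚ_[p])
        * ((permGL p n π : GL (Fin n) ℚ_[p]) : Matrix (Fin n) (Fin n) ℚ_[p])
      = Matrix.single a (π⁻¹ b) c := by
  apply Matrix.ext
  intro k l
  rw [mul_permM_apply, std_apply, std_apply]
  have hiff : (a = k ∧ b = π l) ↔ (a = k ∧ π⁻¹ b = l) := by
    constructor
    · rintro ⟨h1, h2⟩; exact ⟨h1, by rw [h2]; simp⟩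
    · rintro ⟨h1, h2⟩; exact ⟨h1, by rw [← h2]; simp⟩
  exact if_congr hiff rfl rfl

lemma permGL_mul_stdU (π : Equiv.Perm (Fin n)) {a b : Fin n} (hne : a ≠ b) (c : ℚ_[p]) :
    permGL p n π * stdU a b hne c
      = stdU (π a) (π b) (fun hcon => hne (π.injective hcon)) c * permGL p n π := by
  apply Units.ext
  rw [Units.val_mul, Units.val_mul, stdU_val, stdU_val]
  rw [mul_add, mul_one, add_mul, one_mul]
  rw [permM_mul_std, std_mul_permM, show π⁻¹ (π b) = b by simp]

lemma diag_mul_std (d : Fin n → ℚ_[p]) (a b : Fin n) (c : ℚ_[p]) :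
    (Matrix.diagonal d : Matrix (Fin n) (Fin n) ℚ_[p]) * Matrix.single a b c
      = Matrix.single a b (d a * c) := by
  apply Matrix.ext
  intro k l
  rw [Matrix.diagonal_mul, std_apply, std_apply]
  by_cases h : a = k ∧ b = l
  · obtain ⟨rfl, rfl⟩ := h
    simp
  · rw [if_neg h, if_neg h, mul_zero]

lemma std_mul_diag (a b : Fin n) (c : ℚ_[p]) (d : Fin n → ℚ_[p]) :
    (Matrix.single a b c : Matrix (Fin n) (Fin n) ℚ_[p]) * Matrix.diagonal d
      = Matrix.single a b (c * d b) := by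
  apply Matrix.ext
  intro k l
  rw [Matrix.mul_diagonal, std_apply, std_apply]
  by_cases h : a = k ∧ b = l
  · obtain ⟨rfl, rfl⟩ := h
    simp
  · rw [if_neg h, if_neg h, zero_mul]

lemma permGL_mul_diagU (π : Equiv.Perm (Fin n)) (d : Fin n → ℚ_[p]) (hd : ∀ a, d a ≠ 0) :
    permGL p n π * diagU d hd
      = diagU (fun k => d (π⁻¹ k)) (fun k => hd _) * permGL p n π := by
  apply Units.ext
  rw [Units.val_mul, Units.val_mul, diagU_val, diagU_val]
  apply Matrix.ext
  intro k l
  rw [permM_mul_apply, Matrix.diagonal_mul, Matrix.diagonal_apply, ← entry_apply, permGL_coe]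
  by_cases h1 : k = π l
  · have h2 : π⁻¹ k = l := by rw [h1]; simp
    rw [if_pos h2, if_pos h1, mul_one, h2]
  · have h2 : π⁻¹ k ≠ l := fun hcon => h1 (by rw [← hcon]; simp)
    rw [if_neg h2, if_neg h1, mul_zero]

end UnitsDev

section KeyIdentity

open Equiv

variable {p n}

noncomputable def duF (i i' : Fin n) (c : ℚ_[p]) : Fin n → ℚ_[p] :=
  fun k => if k = i then c⁻¹ else if k = i' then c else 1

lemma duF_ne (i i' : Fin n) {c : ℚ_[p]} (hc : c ≠ 0) : ∀ a, duF i i' c a ≠ 0 := by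
  intro a
  unfold duF
  split_ifs
  · exact inv_ne_zero hc
  · exact hc
  · exact one_ne_zero

noncomputable def d3F (i' : Fin n) : Fin n → ℚ_[p] := fun k => if k = i' then -1 else 1

lemma d3F_ne (i' : Fin n) : ∀ a, d3F i' a ≠ (0:ℚ_[p]) := by
  intro a
  unfold d3F
  split_ifs
  · simp
  · exact one_ne_zero

lemma d3F_norm (i' : Fin n) : ∀ a, ‖(d3F i' a : ℚ_[p])‖ = 1 := by
  intro a
  unfold d3F
  split_ifs <;> simp

lemma permM_mul_diag (π : Equiv.Perm (Fin n)) (d : Fin n → ℚ_[p]) (hd : ∀ a, d a ≠ 0) :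
    ((permGL p n π : GL (Fin n) ℚ_[p]) : Matrix (Fin n) (Fin n) ℚ_[p]) * Matrix.diagonal d
      = Matrix.diagonal (fun k => d (π⁻¹ k)) *
        ((permGL p n π : GL (Fin n) ℚ_[p]) : Matrix (Fin n) (Fin n) ℚ_[p]) := by
  have h := congrArg (Units.val) (permGL_mul_diagU π d hd)
  rwa [Units.val_mul, Units.val_mul, diagU_val, diagU_val] at h

lemma keyI2 {i i' : Fin n} (hne : i ≠ i') {c : ℚ_[p]} (hc : c ≠ 0) :
    stdU i' i (Ne.symm hne) c
      = diagU (duF i i' c) (duF_ne i i' hc)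
        * stdU i i' hne c * permGL p n (Equiv.swap i i')
        * diagU (d3F i') (d3F_ne i')
        * stdU i i' hne c⁻¹ := by
  have hsinv : (Equiv.swap i i')⁻¹ = Equiv.swap i i' := Equiv.swap_inv i i'
  apply Units.ext
  rw [Units.val_mul, Units.val_mul, Units.val_mul, Units.val_mul]
  rw [stdU_val, stdU_val, stdU_val, diagU_val, diagU_val]
  set P := ((permGL p n (Equiv.swap i i') : GL (Fin n) ℚ_[p]) : Matrix (Fin n) (Fin n) ℚ_[p])
    with hP
  have step1 : Matrix.diagonal (duF i i' c) * (1 + Matrix.single i i' c)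
      = Matrix.diagonal (duF i i' c) + Matrix.single i i' 1 := by
    rw [mul_add, mul_one, diag_mul_std]
    congr 1
    have : duF i i' c i = c⁻¹ := by simp [duF]
    rw [this, inv_mul_cancel₀ hc]
  have step2 : (Matrix.diagonal (duF i i' c) + Matrix.single i i' 1) * P
      = Matrix.diagonal (duF i i' c) * P + Matrix.single i i 1 := by
    rw [add_mul, hP, std_mul_permM, hsinv, Equiv.swap_apply_right]
  have step3 : (Matrix.diagonal (duF i i' c) * P + Matrix.single i i 1)
        * Matrix.diagonal (d3F i')
      = Matrix.diagonal (fun k => duF i i' c k * d3F i' (Equiv.swap i i' k)) * P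
        + Matrix.single i i 1 := by
    rw [add_mul, mul_assoc, hP, permM_mul_diag _ _ (d3F_ne i'), hsinv, ← mul_assoc,
      Matrix.diagonal_mul_diagonal, std_mul_diag]
    congr 2
    have : d3F i' i = (1:ℚ_[p]) := by simp [d3F, hne]
    rw [this, one_mul]
  have step4 : (Matrix.diagonal (fun k => duF i i' c k * d3F i' (Equiv.swap i i' k)) * P
        + Matrix.single i i 1) * (1 + Matrix.single i i' c⁻¹)
      = Matrix.diagonal (fun k => duF i i' c k * d3F i' (Equiv.swap i i' k)) * P
        + Matrix.single i' i' 1 + Matrix.single i i 1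
        + Matrix.single i i' c⁻¹ := by
    rw [mul_add, mul_one, add_mul, mul_assoc, hP, permM_mul_std, Equiv.swap_apply_left,
      diag_mul_std, Matrix.single_mul_single_same]
    have he : duF i i' c i' * d3F i' (Equiv.swap i i' i') * c⁻¹ = 1 := by
      rw [Equiv.swap_apply_right]
      have h1 : duF i i' c i' = c := by simp [duF, Ne.symm hne]
      have h2 : d3F i' i = (1:ℚ_[p]) := by simp [d3F, hne]
      rw [h1, h2, mul_one, mul_inv_cancel₀ hc]
    rw [he, one_mul]
    abel
  rw [step1, step2, step3, step4]
  apply Matrix.ext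
  intro k l
  have hPkl : P k l = if k = Equiv.swap i i' l then 1 else 0 := permGL_coe _ k l
  simp only [Matrix.add_apply, Matrix.diagonal_mul, Matrix.one_apply, std_apply, hPkl]
  by_cases hl1 : l = i
  · rw [hl1]
    by_cases hk1 : k = i
    · rw [hk1]
      simp [duF, d3F, hne, Ne.symm hne, Equiv.swap_apply_left]
    · by_cases hk2 : k = i'
      · rw [hk2]
        simp [duF, d3F, hne, Ne.symm hne, Equiv.swap_apply_left]
      · simp [duF, d3F, hk1, hk2, Ne.symm hk1, Ne.symm hk2, Equiv.swap_apply_left]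
  · by_cases hl2 : l = i'
    · rw [hl2]
      by_cases hk1 : k = i
      · rw [hk1]
        simp [duF, d3F, hne, Ne.symm hne, Equiv.swap_apply_right, Equiv.swap_apply_left]
      · by_cases hk2 : k = i'
        · rw [hk2]
          simp [duF, d3F, hne, Ne.symm hne, Equiv.swap_apply_right]
        · simp [duF, d3F, hk1, hk2, Ne.symm hk1, Ne.symm hk2, Equiv.swap_apply_right]
    · rw [Equiv.swap_apply_of_ne_of_ne hl1 hl2]
      by_cases hkl : k = l
      · rw [hkl]
        simp [duF, d3F, hl1, hl2, Ne.symm hl1, Ne.symm hl2,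
          Equiv.swap_apply_of_ne_of_ne hl1 hl2]
      · simp [duF, d3F, hkl, hl1, hl2, Ne.symm hl1, Ne.symm hl2,
          Equiv.swap_apply_of_ne_of_ne hl1 hl2]

end KeyIdentity

section MainDev

open Equiv

variable {p n}

lemma diagU_mem_B (d : Fin n → ℚ_[p]) (hd : ∀ a, d a ≠ 0) : diagU d hd ∈ Bset p n := by
  intro k l hlk
  rw [entry_apply, diagU_val, Matrix.diagonal_apply, if_neg (Fin.ne_of_gt hlk)]

lemma diagU_diag (d : Fin n → ℚ_[p]) (hd : ∀ a, d a ≠ 0) (a : Fin n) :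
    entry p n (diagU d hd) a a = d a := by
  rw [entry_apply, diagU_val, Matrix.diagonal_apply_eq]

lemma entry_conj (π ρ : Equiv.Perm (Fin n)) (X : GL (Fin n) ℚ_[p]) (a b : Fin n) :
    entry p n (permGL p n π * X * permGL p n ρ) a b = entry p n X (π⁻¹ a) (ρ b) := by
  rw [entry_apply, Units.val_mul, mul_permM_apply, Units.val_mul, permM_mul_apply, entry_apply]

lemma swap_lt_of {i i' : Fin n} (hadj : (i' : ℕ) = (i:ℕ) + 1) {a b : Fin n} (hba : b < a)
    (hnot : ¬(a = i' ∧ b = i)) : Equiv.swap i i' b < Equiv.swap i i' a := by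
  have hv : (b:ℕ) < (a:ℕ) := hba
  rw [Fin.lt_def, Equiv.swap_apply_def, Equiv.swap_apply_def]
  simp only [Fin.ext_iff] at hnot
  split_ifs with h1 h2 h3 h4 h5 h6 h7 h8 <;>
    simp only [Fin.ext_iff] at * <;> omega

lemma conj_swap_mem_J {i i' : Fin n} (hadj : (i' : ℕ) = (i:ℕ) + 1) {X : GL (Fin n) ℚ_[p]}
    (hX : X ∈ Jset p n) (h0 : entry p n X i i' = 0) :
    permGL p n (Equiv.swap i i') * X * permGL p n (Equiv.swap i i') ∈ Jset p n := by
  have hsinv : (Equiv.swap i i')⁻¹ = Equiv.swap i i' := Equiv.swap_inv i i'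
  have hPinv : (permGL p n (Equiv.swap i i'))⁻¹ = permGL p n (Equiv.swap i i') := by
    rw [permGL_inv, hsinv]
  have hconj : ∀ (Y : GL (Fin n) ℚ_[p]) (a b : Fin n),
      entry p n (permGL p n (Equiv.swap i i') * Y * permGL p n (Equiv.swap i i')) a b
        = entry p n Y (Equiv.swap i i' a) (Equiv.swap i i' b) := by
    intro Y a b
    rw [entry_conj, hsinv]
  have hinveq : (permGL p n (Equiv.swap i i') * X * permGL p n (Equiv.swap i i'))⁻¹
      = permGL p n (Equiv.swap i i') * X⁻¹ * permGL p n (Equiv.swap i i') := by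
    rw [_root_.mul_inv_rev, _root_.mul_inv_rev, hPinv, mul_assoc]
  refine ⟨?_, ?_, ?_⟩
  · intro k l
    rw [hconj]
    exact hX.1 _ _
  · intro k l
    rw [hinveq, hconj]
    exact hX.2.1 _ _
  · intro a b hba
    rw [hconj]
    by_cases hcase : a = i' ∧ b = i
    · obtain ⟨rfl, rfl⟩ := hcase
      rw [Equiv.swap_apply_right, Equiv.swap_apply_left, h0, norm_zero]
      exact one_pos
    · exact hX.2.2 _ _ (swap_lt_of hadj hba hcase)

/-- The key structural lemma: `w_σ · u · w_s ∈ B° w_τ J` for `u ∈ J`. -/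
lemma mainL (i : Fin n) (h : (i:ℕ)+1 < n) (σ : Equiv.Perm (Fin n)) (u : GL (Fin n) ℚ_[p])
    (hu : u ∈ Jset p n) :
    ∃ b ∈ Bset p n, (∀ a, ‖entry p n b a a‖ = 1) ∧ ∃ τ, ∃ j ∈ Jset p n,
      permGL p n σ * u * permGL p n (Equiv.swap i (finSucc n i h))
        = b * permGL p n τ * j := by
  set i' := finSucc n i h with hi'
  have hadj : (i' : ℕ) = (i:ℕ) + 1 := rfl
  have hne : i ≠ i' := finSucc_ne n i h
  have hii' : i < i' := by rw [Fin.lt_def]; omega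
  set s := Equiv.swap i i' with hs
  have hPP : permGL p n s * permGL p n s = 1 := by
    rw [permGL_mul, Equiv.swap_mul_self, permGL_one]
  set d := entry p n u i' i' with hddef
  have hd : ‖d‖ = 1 := J_diag_unit hu i'
  have hd0 : d ≠ 0 := by
    intro h0
    rw [h0, norm_zero] at hd
    exact zero_ne_one hd
  set c := entry p n u i i' * d⁻¹ with hcdef
  have hc1 : ‖c‖ ≤ 1 := by
    rw [hcdef, norm_mul, norm_inv, hd, inv_one, mul_one]
    exact hu.1 i i'
  set u'' := stdU i i' hne (-c) * u with hu''def
  have hu''J : u'' ∈ Jset p n :=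
    J_mul (stdU_mem_J_upper hne hii' (by rwa [norm_neg])) hu
  have h0 : entry p n u'' i i' = 0 := by
    have hval : ((u'' : GL (Fin n) ℚ_[p]) : Matrix (Fin n) (Fin n) ℚ_[p])
        = (1 + Matrix.single i i' (-c)) * (u : Matrix (Fin n) (Fin n) ℚ_[p]) := by
      rw [hu''def, Units.val_mul, stdU_val]
    rw [entry_apply, hval, Matrix.add_mul, Matrix.one_mul, Matrix.add_apply,
      Matrix.single_mul_apply_same]
    show entry p n u i i' + -c * entry p n u i' i' = 0
    rw [hcdef, neg_mul, mul_assoc, inv_mul_cancel₀ hd0, mul_one, add_neg_cancel]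
  set ut := permGL p n s * u'' * permGL p n s with hut
  have hutJ : ut ∈ Jset p n := conj_swap_mem_J hadj hu''J h0
  have hkey : permGL p n σ * u * permGL p n s
      = (permGL p n σ * stdU i i' hne c * permGL p n s) * ut := by
    have h5 : stdU i i' hne c * u'' = u := by
      rw [hu''def, ← mul_assoc, stdU_mul, add_neg_cancel, stdU_zero, one_mul]
    have h6 : u'' * permGL p n s = permGL p n s * ut := by
      rw [hut, ← mul_assoc, ← mul_assoc, hPP, one_mul]
    rw [← h5]
    simp only [mul_assoc]
    rw [h6]
  rcases lt_trichotomy (σ i) (σ i') with hσlt | hσeq | hσgt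
  · -- σ i < σ i'
    have hσne : σ i ≠ σ i' := Fin.ne_of_lt hσlt
    have hcore : permGL p n σ * stdU i i' hne c * permGL p n s
        = stdU (σ i) (σ i') hσne c * permGL p n (σ * s) := by
      calc permGL p n σ * stdU i i' hne c * permGL p n s
          = (stdU (σ i) (σ i') (fun hcon => hne (σ.injective hcon)) c * permGL p n σ)
              * permGL p n s := by rw [permGL_mul_stdU]
        _ = stdU (σ i) (σ i') hσne c * (permGL p n σ * permGL p n s) := by rw [mul_assoc]
        _ = stdU (σ i) (σ i') hσne c * permGL p n (σ * s) := by rw [permGL_mul]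
    refine ⟨stdU (σ i) (σ i') hσne c, stdU_mem_B hσne hσlt c,
      fun a => by rw [stdU_diag]; exact norm_one, σ * s, ut, hutJ, ?_⟩
    rw [hkey, hcore]
  · exact absurd (σ.injective hσeq) hne
  · -- σ i' < σ i
    have h7 : permGL p n s * stdU i i' hne c = stdU i' i (Ne.symm hne) c * permGL p n s := by
      have hh := permGL_mul_stdU s hne c
      rw [hs] at hh ⊢
      rw [stdU_congr (Equiv.swap_apply_left i i') (Equiv.swap_apply_right i i') _
        (Ne.symm hne) c] at hh
      exact hh
    have h8 : stdU i i' hne c * permGL p n s = permGL p n s * stdU i' i (Ne.symm hne) c := by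
      calc stdU i i' hne c * permGL p n s
          = (permGL p n s * permGL p n s) * (stdU i i' hne c * permGL p n s) := by
            rw [hPP, one_mul]
        _ = permGL p n s * ((permGL p n s * stdU i i' hne c) * permGL p n s) := by
            simp only [mul_assoc]
        _ = permGL p n s * ((stdU i' i (Ne.symm hne) c * permGL p n s) * permGL p n s) := by
            rw [h7]
        _ = permGL p n s * (stdU i' i (Ne.symm hne) c * (permGL p n s * permGL p n s)) := by
            simp only [mul_assoc]
        _ = permGL p n s * stdU i' i (Ne.symm hne) c := by rw [hPP, mul_one]
    have hcore : permGL p n σ * stdU i i' hne c * permGL p n s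
        = permGL p n (σ * s) * stdU i' i (Ne.symm hne) c := by
      calc permGL p n σ * stdU i i' hne c * permGL p n s
          = permGL p n σ * (stdU i i' hne c * permGL p n s) := by rw [mul_assoc]
        _ = permGL p n σ * (permGL p n s * stdU i' i (Ne.symm hne) c) := by rw [h8]
        _ = (permGL p n σ * permGL p n s) * stdU i' i (Ne.symm hne) c := by rw [mul_assoc]
        _ = permGL p n (σ * s) * stdU i' i (Ne.symm hne) c := by rw [permGL_mul]
    rcases lt_or_eq_of_le hc1 with hclt | hceq
    · refine ⟨1, B_one, fun a => by
        rw [entry_apply, Units.val_one, Matrix.one_apply_eq]; exact norm_one,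
        σ * s, stdU i' i (Ne.symm hne) c * ut,
        J_mul (stdU_mem_J_lower (Ne.symm hne) hii' hclt) hutJ, ?_⟩
      rw [hkey, hcore, one_mul, mul_assoc]
    · have hceq1 : ‖c‖ = 1 := hceq
      have hc0 : c ≠ 0 := by
        intro hcon
        rw [hcon, norm_zero] at hceq1
        exact zero_ne_one hceq1
      set π := σ * s with hπ
      have hπi : π i = σ i' := by
        rw [hπ, Equiv.Perm.mul_apply, hs, Equiv.swap_apply_left]
      have hπi' : π i' = σ i := by
        rw [hπ, Equiv.Perm.mul_apply, hs, Equiv.swap_apply_right]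
      have hπne : π i ≠ π i' := fun hcon => hne (π.injective hcon)
      have hπlt : π i < π i' := by rw [hπi, hπi']; exact hσgt
      have h11 : permGL p n π * permGL p n s = permGL p n σ := by
        rw [permGL_mul, hπ, mul_assoc, Equiv.swap_mul_self, mul_one]
      have h9 := permGL_mul_diagU π (duF i i' c) (duF_ne i i' hc0)
      have h10 := permGL_mul_stdU π hne c
      refine ⟨diagU (fun k => duF i i' c (π⁻¹ k)) (fun k => duF_ne i i' hc0 _)
          * stdU (π i) (π i') hπne c,
        B_mul (diagU_mem_B _ _) (stdU_mem_B hπne hπlt c),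
        ?_, σ,
        diagU (d3F i') (d3F_ne i') * stdU i i' hne c⁻¹ * ut,
        J_mul (J_mul (diagU_mem_J _ (d3F_norm i'))
          (stdU_mem_J_upper hne hii' (by rw [norm_inv, hceq1]; norm_num))) hutJ, ?_⟩
      · intro a
        rw [B_diag_mul (diagU_mem_B _ _) (stdU_mem_B hπne hπlt c), stdU_diag, mul_one,
          diagU_diag]
        unfold duF
        split_ifs
        · rw [norm_inv, hceq1]; norm_num
        · exact hceq1
        · exact norm_one
      · rw [hkey, hcore, keyI2 hne hc0]
        simp only [← mul_assoc]
        rw [show permGL p n π * diagU (duF i i' c) (duF_ne i i' hc0)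
            = diagU (fun k => duF i i' c (π⁻¹ k)) (fun k => duF_ne i i' hc0 _) * permGL p n π
          from h9]
        rw [mul_assoc (diagU (fun k => duF i i' c (π⁻¹ k)) (fun k => duF_ne i i' hc0 _))
          (permGL p n π) (stdU i i' hne c)]
        rw [show permGL p n π * stdU i i' hne c
            = stdU (π i) (π i') (fun hcon => hne (π.injective hcon)) c * permGL p n π
          from h10]
        simp only [← mul_assoc]
        rw [mul_assoc _ (permGL p n π) (permGL p n s), h11]

/-- Disjointness of cells: `B w_σ J = B w_τ J` forces `σ = τ`. -/
lemma cellEq {b b' j j' : GL (Fin n) ℚ_[p]} (hb : b ∈ Bset p n) (hb' : b' ∈ Bset p n)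
    (hj : j ∈ Jset p n) (hj' : j' ∈ Jset p n) {σ τ : Equiv.Perm (Fin n)}
    (heq : b * permGL p n σ * j = b' * permGL p n τ * j') : σ = τ := by
  have hcB : b'⁻¹ * b ∈ Bset p n := B_mul (B_inv hb') hb
  have huJ : j' * j⁻¹ ∈ Jset p n := J_mul hj' (J_inv hj)
  have hrel : permGL p n τ * (j' * j⁻¹) = (b'⁻¹ * b) * permGL p n σ := by
    have h1 : b'⁻¹ * (b * permGL p n σ * j) * j⁻¹
        = b'⁻¹ * (b' * permGL p n τ * j') * j⁻¹ := by rw [heq]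
    simp only [mul_assoc] at h1
    rw [inv_mul_cancel_left] at h1
    -- h1 : b'⁻¹ * (b * (permGL σ * (j * j⁻¹))) = permGL τ * (j' * j⁻¹)
    rw [mul_inv_cancel, mul_one] at h1
    rw [← h1]
    simp only [mul_assoc]
  have hdiag : ∀ a, entry p n (j' * j⁻¹) a a ≠ 0 := by
    intro a hcon
    have hh := J_diag_unit huJ a
    rw [hcon, norm_zero] at hh
    exact zero_ne_one hh
  have hle : ∀ a, τ a ≤ σ a := by
    intro a
    refine le_of_not_gt (fun hlt => ?_)
    have hLHS : entry p n (permGL p n τ * (j' * j⁻¹)) (τ a) a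
        = entry p n (j' * j⁻¹) a a := by
      rw [entry_apply, Units.val_mul, permM_mul_apply, show τ⁻¹ (τ a) = a by simp, entry_apply]
    have hRHS : entry p n ((b'⁻¹ * b) * permGL p n σ) (τ a) a
        = entry p n (b'⁻¹ * b) (τ a) (σ a) := by
      rw [entry_apply, Units.val_mul, mul_permM_apply, entry_apply]
    rw [hrel, hRHS, hcB (τ a) (σ a) hlt] at hLHS
    exact hdiag a hLHS.symm
  exact (perm_eq_of_le σ τ hle).symm

end MainDev

/-- `φ⁺(g) = ∑_σ f_σ(g)` is an eigenvector of the Iwahori Hecke operators at the simple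
reflections with eigenvalue `p`: `∑_{t=0}^{p-1} φ⁺(g·x_i(t)·w_{s_i}) = p·φ⁺(g)`. -/
theorem phiPlus_hecke_eigenvector (hn : 2 ≤ n)
    (z : Fin n → ℂˣ) (hz : ∏ i : Fin n, z i = 1)
    (f : Equiv.Perm (Fin n) → GL (Fin n) ℚ_[p] → ℂ)
    (hsupp : ∀ (σ : Equiv.Perm (Fin n)) (g : GL (Fin n) ℚ_[p]),
      (¬ ∃ b ∈ Bset p n, ∃ j ∈ Jset p n, g = b * permGL p n σ * j) → f σ g = 0)
    (hnorm : ∀ σ : Equiv.Perm (Fin n), f σ (permGL p n σ) = 1)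
    (hequiv : ∀ (σ : Equiv.Perm (Fin n)), ∀ b ∈ Bset p n, ∀ (g : GL (Fin n) ℚ_[p]),
      ∀ j ∈ Jset p n, f σ (b * g * j) = chiDelta p n z b * f σ g)
    (φ : GL (Fin n) ℚ_[p] → ℂ)
    (hφ : ∀ g : GL (Fin n) ℚ_[p], φ g = ∑ σ : Equiv.Perm (Fin n), f σ g)
    (i : Fin n) (h : (i : ℕ) + 1 < n) (g : GL (Fin n) ℚ_[p]) :
    ∑ t : Fin p,
      φ (g * elemGL p n i (finSucc n i h) (finSucc_ne n i h) ((t : ℕ) : ℚ_[p])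
            * permGL p n (Equiv.swap i (finSucc n i h)))
      = (p : ℂ) * φ g := by
  classical
  set i' := finSucc n i h with hi'
  have hadj : ((i' : Fin n) : ℕ) = (i : ℕ) + 1 := rfl
  have hii' : i < i' := by rw [Fin.lt_def]; omega
  set s := Equiv.swap i i' with hs
  have hPP : permGL p n s * permGL p n s = 1 := by
    rw [permGL_mul, Equiv.swap_mul_self, permGL_one]
  -- value of φ on a decomposed element
  have hval : ∀ (b : GL (Fin n) ℚ_[p]), b ∈ Bset p n → ∀ (σ : Equiv.Perm (Fin n))
      (j : GL (Fin n) ℚ_[p]), j ∈ Jset p n →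
      φ (b * permGL p n σ * j) = chiDelta p n z b := by
    intro b hb σ j hj
    rw [hφ]
    rw [Finset.sum_eq_single σ]
    · rw [hequiv σ b hb (permGL p n σ) j hj, hnorm σ, mul_one]
    · intro τ _ hτ
      apply hsupp
      rintro ⟨b', hb', j', hj', heq⟩
      exact hτ (cellEq hb' hb hj' hj heq.symm)
    · intro hmem
      exact absurd (Finset.mem_univ σ) hmem
  -- φ vanishes off the big cell union
  have hzero : ∀ (x : GL (Fin n) ℚ_[p]),
      (¬ ∃ b ∈ Bset p n, ∃ σ : Equiv.Perm (Fin n), ∃ j ∈ Jset p n,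
        x = b * permGL p n σ * j) → φ x = 0 := by
    intro x hx
    rw [hφ]
    refine Finset.sum_eq_zero (fun τ _ => ?_)
    refine hsupp τ x (fun hcon => hx ?_)
    obtain ⟨b, hb, j, hj, heq⟩ := hcon
    exact ⟨b, hb, τ, j, hj, heq⟩
  -- right J-invariance of φ
  have hJinv : ∀ (x u : GL (Fin n) ℚ_[p]), u ∈ Jset p n → φ (x * u) = φ x := by
    intro x u hu
    rw [hφ, hφ]
    refine Finset.sum_congr rfl (fun τ _ => ?_)
    have hh := hequiv τ 1 B_one x u hu
    rw [one_mul, chiDelta_one, one_mul] at hh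
    exact hh
  -- right w_s-invariance of φ
  have hWinv : ∀ x : GL (Fin n) ℚ_[p], φ (x * permGL p n s) = φ x := by
    intro x
    by_cases hdec : ∃ b ∈ Bset p n, ∃ σ : Equiv.Perm (Fin n), ∃ j ∈ Jset p n,
        x = b * permGL p n σ * j
    · obtain ⟨b, hb, σ, j, hj, rfl⟩ := hdec
      obtain ⟨b', hb', hb'diag, τ', j', hj', hLdec⟩ := mainL i h σ j hj
      have hgs : b * permGL p n σ * j * permGL p n s = (b * b') * permGL p n τ' * j' := by
        have h1 : b * permGL p n σ * j * permGL p n s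
            = b * (permGL p n σ * j * permGL p n s) := by simp only [mul_assoc]
        rw [h1, hLdec]
        simp only [mul_assoc]
      rw [hgs, hval _ (B_mul hb hb') _ _ hj', hval _ hb _ _ hj,
        chiDelta_mul z hb hb', chiDelta_eq_one z hb'diag, mul_one]
    · have hdec' : ¬ ∃ b ∈ Bset p n, ∃ σ : Equiv.Perm (Fin n), ∃ j ∈ Jset p n,
          x * permGL p n s = b * permGL p n σ * j := by
        rintro ⟨b, hb, σ, j, hj, heq⟩
        apply hdec
        have hx : x = b * permGL p n σ * j * permGL p n s := by
          have h2 : x = x * permGL p n s * permGL p n s := by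
            rw [mul_assoc, hPP, mul_one]
          rw [h2, heq]
        obtain ⟨b', hb', _, τ', j', hj', hLdec⟩ := mainL i h σ j hj
        refine ⟨b * b', B_mul hb hb', τ', j', hj', ?_⟩
        rw [hx]
        have h1 : b * permGL p n σ * j * permGL p n s
            = b * (permGL p n σ * j * permGL p n s) := by simp only [mul_assoc]
        rw [h1, hLdec]
        simp only [mul_assoc]
      rw [hzero _ hdec', hzero _ hdec]
  -- each summand equals φ g
  have hsum : ∀ t : Fin p,
      φ (g * elemGL p n i (finSucc n i h) (finSucc_ne n i h) ((t : ℕ) : ℚ_[p])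
          * permGL p n (Equiv.swap i (finSucc n i h))) = φ g := by
    intro t
    have helem : elemGL p n i (finSucc n i h) (finSucc_ne n i h) ((t : ℕ) : ℚ_[p])
        = stdU i i' (finSucc_ne n i h) ((t : ℕ) : ℚ_[p]) := Units.ext rfl
    have htnorm : ‖(((t : ℕ) : ℚ_[p]))‖ ≤ 1 := by
      have hcast : (((t : ℕ) : ℚ_[p])) = ((((t : ℕ) : ℤ)) : ℚ_[p]) := by push_cast; ring
      rw [hcast]
      exact Padic.norm_int_le_one _
    rw [helem, hWinv, hJinv _ _ (stdU_mem_J_upper (finSucc_ne n i h) hii' htnorm)]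
  rw [Finset.sum_congr rfl (fun t _ => hsum t), Finset.sum_const, Finset.card_univ,
    Fintype.card_fin, nsmul_eq_mul]
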